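/- Let S_Z be an orbital fuzzy iterated function system and u ∈ F*_S. Then for every x ∈ [u]^*, supp u_x ⊆ A_x, where u_x = lim_n Z^[n](δ_x) and A_x = lim_n F_S^[n]({x}) is the attractor of the underlying orbital IFS starting at x. -/

import Mathlib

open Metric Filter Topology Set

/-- The orbit of a point `x` under the family of maps `f i`:
`x` together with all images of `x` under finite compositions of the `f i`. -/
def orbitIFS {X I : Type*} (f : I → X → X) (x : X) : Set X :=
  ⋃ l : List I, {l.foldr (fun i y => f i y) x}

/-- The fractal (Hutchinson–Barnsley) operator `K ↦ ⋃ i, f i '' K`. -/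
def fractalOp {X I : Type*} (f : I → X → X) (K : Set X) : Set X :=
  ⋃ i, f i '' K

/-- Image of a fuzzy set under a map: `f(u)(y) = sup_{x ∈ f⁻¹ y} u x` (0 if empty). -/
noncomputable def fuzzyImage {X : Type*} (g : X → X) (u : X → ℝ) : X → ℝ :=
  fun y => sSup (u '' (g ⁻¹' {y}))

/-- The fuzzy Hutchinson–Barnsley operator `Z(u) = ∨ i, ρ i (f i (u))`. -/
noncomputable def Zop {X I : Type*} (f : I → X → X) (ρ : I → ℝ → ℝ) (u : X → ℝ) : X → ℝ :=
  fun y => ⨆ i, ρ i (fuzzyImage (f i) u y)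

/-- The metric `d_∞(u,v) = sup_{α ∈ (0,1]} h([u]^α, [v]^α)`. -/
noncomputable def dInfty {X : Type*} [MetricSpace X] (u v : X → ℝ) : ℝ :=
  ⨆ α : Ioc (0:ℝ) 1, hausdorffDist {x | (α:ℝ) ≤ u x} {x | (α:ℝ) ≤ v x}

/-- The support of a fuzzy set: the closure of `{x | 0 < u x}`. -/
def fsupp {X : Type*} [MetricSpace X] (u : X → ℝ) : Set X := closure {x | 0 < u x}

/-- The crisp fuzzy point `δ_s`. -/
def fdelta {X : Type*} [DecidableEq X] (s : X) : X → ℝ := fun t => if t = s then 1 else 0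

/-- `u^x` : the restriction of `u` to the closure of the orbit of `w` (zero outside). -/
noncomputable def restrictO {X I : Type*} [MetricSpace X] (f : I → X → X) (u : X → ℝ)
    (w : X) : X → ℝ :=
  (closure (orbitIFS f w)).indicator u

/-- A normal compactly supported fuzzy set (with values in `[0,1]`). -/
def IsFuzzyN {X : Type*} [MetricSpace X] (u : X → ℝ) : Prop :=
  (∀ x, u x ∈ Icc (0:ℝ) 1) ∧ (∃ x, u x = 1) ∧ IsCompact (fsupp u)

/-- An upper semicontinuous normal compactly supported fuzzy set: membership in `F*_X`. -/
def IsFuzzyStar {X : Type*} [MetricSpace X] (u : X → ℝ) : Prop :=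
  IsFuzzyN u ∧ UpperSemicontinuous u

/-- Membership in `F*_S`: for each point of positive membership there is an orbit
containing it together with a point of membership one. -/
def InFS {X I : Type*} [MetricSpace X] (f : I → X → X) (u : X → ℝ) : Prop :=
  IsFuzzyStar u ∧ ∀ x, 0 < u x → ∃ w y, x ∈ orbitIFS f w ∧ y ∈ orbitIFS f w ∧ u y = 1

/-- The orbital contraction condition. -/
def OrbitalContr {X I : Type*} [MetricSpace X] (f : I → X → X) (C : ℝ) : Prop :=
  ∀ i x, ∀ y ∈ orbitIFS f x, ∀ z ∈ orbitIFS f x, dist (f i y) (f i z) ≤ C * dist y z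

/-- An admissible system of grey level maps. -/
def Admissible {I : Type*} (ρ : I → ℝ → ℝ) : Prop :=
  (∀ i, ρ i 0 = 0) ∧ (∀ i, MonotoneOn (ρ i) (Icc (0:ℝ) 1)) ∧
  (∀ i, ∀ t ∈ Icc (0:ℝ) 1, ContinuousWithinAt (ρ i) (Ici t) t) ∧
  (∀ i, ∀ t ∈ Icc (0:ℝ) 1, ρ i t ∈ Icc (0:ℝ) 1) ∧ (∃ j, ρ j 1 = 1)

lemma fuzzyImage_Icc' {X : Type*} (g : X → X) (v : X → ℝ)
    (hv : ∀ z, v z ∈ Icc (0:ℝ) 1) (y : X) : fuzzyImage g v y ∈ Icc (0:ℝ) 1 := by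
  constructor
  · exact Real.sSup_nonneg (fun a ha => by obtain ⟨z, _, rfl⟩ := ha; exact (hv z).1)
  · exact Real.sSup_le (fun a ha => by obtain ⟨z, _, rfl⟩ := ha; exact (hv z).2) zero_le_one

lemma Zstep {X I : Type*} [Finite I] [Nonempty I]
    (f : I → X → X) (ρ : I → ℝ → ℝ) (hρ : Admissible ρ)
    (v : X → ℝ) (hv : ∀ z, v z ∈ Icc (0:ℝ) 1) :
    (∀ z, Zop f ρ v z ∈ Icc (0:ℝ) 1) ∧
    ((∃ w, v w = 1) → ∃ w, Zop f ρ v w = 1) ∧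
    {z | 0 < Zop f ρ v z} ⊆ fractalOp f {z | 0 < v z} := by
  obtain ⟨hρ0, _hmono, _hcont, hρIcc, j, hj⟩ := hρ
  have hr : ∀ (z : X) (i : I), ρ i (fuzzyImage (f i) v z) ∈ Icc (0:ℝ) 1 :=
    fun z i => hρIcc i _ (fuzzyImage_Icc' (f i) v hv z)
  have hbdd : ∀ z : X, BddAbove (Set.range fun i => ρ i (fuzzyImage (f i) v z)) :=
    fun z => (Set.finite_range _).bddAbove
  have hIcc : ∀ z, Zop f ρ v z ∈ Icc (0:ℝ) 1 := by
    intro z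
    constructor
    · exact le_trans (hr z (Classical.arbitrary I)).1 (le_ciSup (hbdd z) _)
    · exact ciSup_le fun i => (hr z i).2
  refine ⟨hIcc, ?_, ?_⟩
  · rintro ⟨w, hw⟩
    have hS : (1:ℝ) ∈ v '' (f j ⁻¹' {f j w}) := ⟨w, rfl, hw⟩
    have hbS : BddAbove (v '' (f j ⁻¹' {f j w})) :=
      ⟨1, fun a ha => by obtain ⟨z, _, rfl⟩ := ha; exact (hv z).2⟩
    have ht : fuzzyImage (f j) v (f j w) = 1 :=
      le_antisymm (fuzzyImage_Icc' (f j) v hv (f j w)).2 (le_csSup hbS hS)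
    refine ⟨f j w, le_antisymm (hIcc _).2 ?_⟩
    calc (1:ℝ) = ρ j (fuzzyImage (f j) v (f j w)) := by rw [ht, hj]
    _ ≤ Zop f ρ v (f j w) := le_ciSup (hbdd _) j
  · intro z hz
    have hex : ∃ i, 0 < ρ i (fuzzyImage (f i) v z) := by
      by_contra h
      push_neg at h
      exact absurd (ciSup_le h : Zop f ρ v z ≤ 0) (not_le.2 hz)
    obtain ⟨i, hi⟩ := hex
    have htI := fuzzyImage_Icc' (f i) v hv z
    have htne : fuzzyImage (f i) v z ≠ 0 := by
      intro h
      rw [h, hρ0 i] at hi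
      exact lt_irrefl _ hi
    have htpos : 0 < fuzzyImage (f i) v z := lt_of_le_of_ne htI.1 (Ne.symm htne)
    have hex2 : ∃ a ∈ v '' (f i ⁻¹' {z}), 0 < a := by
      by_contra h
      push_neg at h
      exact absurd (Real.sSup_nonpos h : fuzzyImage (f i) v z ≤ 0) (not_le.2 htpos)
    obtain ⟨a, ⟨w, hw1, rfl⟩, hapos⟩ := hex2
    exact Set.mem_iUnion.2 ⟨i, w, hapos, hw1⟩

/-- Remark 2.8: `supp u_x ⊆ A_x`. -/
theorem stmt15 {X I : Type*} [MetricSpace X] [CompleteSpace X] [DecidableEq X]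
    [Finite I] [Nonempty I]
    (f : I → X → X) (hcont : ∀ i, Continuous (f i))
    (C : ℝ) (hC0 : 0 ≤ C) (hC1 : C < 1) (horb : OrbitalContr f C)
    (ρ : I → ℝ → ℝ) (hρ : Admissible ρ)
    (u : X → ℝ) (hu : InFS f u)
    (x : X) (hx : 0 < u x)
    (ux : X → ℝ) (huxStar : IsFuzzyStar ux)
    (hux : Tendsto (fun n => dInfty ((Zop f ρ)^[n] (fdelta x)) ux) atTop (nhds 0))
    (Ax : Set X) (hAxcp : IsCompact Ax) (hAxne : Ax.Nonempty)
    (hAx : Tendsto (fun n => hausdorffDist ((fractalOp f)^[n] {x}) Ax) atTop (nhds 0)) :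
    fsupp ux ⊆ Ax := by
  classical
  set v : ℕ → X → ℝ := fun n => (Zop f ρ)^[n] (fdelta x) with hv
  set F : ℕ → Set X := fun n => (fractalOp f)^[n] {x} with hF
  -- F n is compact and nonempty
  have hFcomp : ∀ n, IsCompact (F n) ∧ (F n).Nonempty := by
    intro n
    induction n with
    | zero => exact ⟨isCompact_singleton, ⟨x, rfl⟩⟩
    | succ n ih =>
      have h1 : F (n+1) = fractalOp f (F n) := Function.iterate_succ_apply' _ _ _
      rw [h1]
      refine ⟨isCompact_iUnion fun i => (ih.1.image (hcont i)), ?_⟩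
      obtain ⟨z, hz⟩ := ih.2
      exact ⟨f (Classical.arbitrary I) z, Set.mem_iUnion.2 ⟨_, z, hz, rfl⟩⟩
  -- key induction on properties of v n
  have key : ∀ n, (∀ z, v n z ∈ Icc (0:ℝ) 1) ∧ (∃ w, v n w = 1) ∧
      IsCompact (fsupp (v n)) ∧ {z | 0 < v n z} ⊆ F n := by
    intro n
    induction n with
    | zero =>
      have hv0 : v 0 = fdelta x := rfl
      have hF0 : F 0 = {x} := rfl
      have hpos : {z | 0 < fdelta x z} = {x} := by
        ext z
        simp only [Set.mem_setOf_eq, fdelta, Set.mem_singleton_iff]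
        split <;> simp_all
      rw [hv0, hF0]
      refine ⟨fun z => ?_, ⟨x, by simp [fdelta]⟩, ?_, ?_⟩
      · simp only [fdelta]; split <;> norm_num
      · simp only [fsupp, hpos, closure_singleton]
        exact isCompact_singleton
      · rw [hpos]
    | succ n ih =>
      obtain ⟨hIcc, hnorm, hcomp, hsub⟩ := ih
      have hvs : v (n+1) = Zop f ρ (v n) := Function.iterate_succ_apply' _ _ _
      have hFs : F (n+1) = fractalOp f (F n) := Function.iterate_succ_apply' _ _ _
      obtain ⟨Z1, Z2, Z3⟩ := Zstep f ρ hρ (v n) hIcc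
      have hsub' : {z | 0 < v (n+1) z} ⊆ F (n+1) := by
        rw [hvs, hFs]
        refine Z3.trans ?_
        exact Set.iUnion_mono fun i => Set.image_mono hsub
      refine ⟨by rw [hvs]; exact Z1, by rw [hvs]; exact Z2 hnorm, ?_, hsub'⟩
      · have : fsupp (v (n+1)) ⊆ F (n+1) :=
          closure_minimal hsub' (hFcomp (n+1)).1.isClosed
        exact (hFcomp (n+1)).1.of_isClosed_subset isClosed_closure this
  -- it suffices to show the positivity set is inside Ax
  have hAxcl : IsClosed Ax := hAxcp.isClosed
  refine closure_minimal ?_ hAxcl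
  intro y hy
  simp only [Set.mem_setOf_eq] at hy
  set α : ℝ := ux y with hα
  have hα0 : 0 < α := hy
  have hα1 : α ≤ 1 := (huxStar.1.1 y).2
  have hsuppux : IsCompact (fsupp ux) := huxStar.1.2.2
  -- show infDist y Ax < ε for all ε > 0
  have hmain : ∀ ε : ℝ, 0 < ε → infDist y Ax < ε := by
    intro ε hε
    have hε3 : (0:ℝ) < ε/3 := by linarith
    have h1 : ∀ᶠ n in atTop, dInfty (v n) ux < ε/3 := hux.eventually (eventually_lt_nhds hε3)
    have h2 : ∀ᶠ n in atTop, hausdorffDist (F n) Ax < ε/3 := hAx.eventually (eventually_lt_nhds hε3)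
    obtain ⟨n, hn1, hn2⟩ := (h1.and h2).exists
    obtain ⟨hIcc, ⟨w, hw⟩, hcomp, hsub⟩ := key n
    -- α-cuts
    set s : Set X := {z | α ≤ v n z} with hs
    set t : Set X := {z | α ≤ ux z} with ht
    have hsne : s.Nonempty := ⟨w, by rw [Set.mem_setOf_eq, hw]; exact hα1⟩
    have htne : t.Nonempty := ⟨y, le_refl α⟩
    have hssub : s ⊆ fsupp (v n) := fun z hz => subset_closure (lt_of_lt_of_le hα0 hz)
    have htsub : t ⊆ fsupp ux := fun z hz => subset_closure (lt_of_lt_of_le hα0 hz)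
    have hsbd : Bornology.IsBounded s := hcomp.isBounded.subset hssub
    have htbd : Bornology.IsBounded t := hsuppux.isBounded.subset htsub
    -- bound the hausdorff distance of cuts by dInfty
    have hcut : hausdorffDist s t ≤ dInfty (v n) ux := by
      have hBdd : BddAbove (Set.range fun β : Ioc (0:ℝ) 1 =>
          hausdorffDist {z | (β:ℝ) ≤ v n z} {z | (β:ℝ) ≤ ux z}) := by
        refine ⟨diam (fsupp (v n) ∪ fsupp ux), ?_⟩
        rintro r ⟨β, rfl⟩
        dsimp only
        have hs' : {z | (β:ℝ) ≤ v n z} ⊆ fsupp (v n) :=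
          fun z hz => subset_closure (lt_of_lt_of_le β.2.1 hz)
        have ht' : {z | (β:ℝ) ≤ ux z} ⊆ fsupp ux :=
          fun z hz => subset_closure (lt_of_lt_of_le β.2.1 hz)
        have hbU : Bornology.IsBounded (fsupp (v n) ∪ fsupp ux) :=
          hcomp.isBounded.union hsuppux.isBounded
        rcases Set.eq_empty_or_nonempty {z | (β:ℝ) ≤ v n z} with he | hne1
        · rw [he, hausdorffDist_empty']; exact diam_nonneg
        rcases Set.eq_empty_or_nonempty {z | (β:ℝ) ≤ ux z} with he | hne2
        · rw [he, hausdorffDist_empty]; exact diam_nonneg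
        calc hausdorffDist {z | (β:ℝ) ≤ v n z} {z | (β:ℝ) ≤ ux z}
            ≤ diam ({z | (β:ℝ) ≤ v n z} ∪ {z | (β:ℝ) ≤ ux z}) :=
              hausdorffDist_le_diam hne1 (hbU.subset (hs'.trans Set.subset_union_left))
                hne2 (hbU.subset (ht'.trans Set.subset_union_right))
          _ ≤ diam (fsupp (v n) ∪ fsupp ux) :=
              diam_mono (Set.union_subset_union hs' ht') hbU
      exact le_ciSup hBdd (⟨α, hα0, hα1⟩ : Ioc (0:ℝ) 1)
    -- from y ∈ t obtain a close point in s
    have hfin : EMetric.hausdorffEdist t s ≠ ⊤ :=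
      hausdorffEdist_ne_top_of_nonempty_of_bounded htne hsne htbd hsbd
    have hyd : infDist y s ≤ hausdorffDist s t := by
      calc infDist y s ≤ hausdorffDist t s :=
            infDist_le_hausdorffDist_of_mem (le_refl α : y ∈ t) hfin
        _ = hausdorffDist s t := hausdorffDist_comm
    have hyd' : infDist y s < ε/3 := lt_of_le_of_lt (hyd.trans hcut) hn1
    obtain ⟨z, hzs, hzd⟩ := (infDist_lt_iff hsne).1 hyd'
    -- z is in F n, hence close to Ax
    have hzF : z ∈ F n := hsub (lt_of_lt_of_le hα0 hzs)
    have hfin2 : EMetric.hausdorffEdist (F n) Ax ≠ ⊤ :=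
      hausdorffEdist_ne_top_of_nonempty_of_bounded (hFcomp n).2 hAxne
        (hFcomp n).1.isBounded hAxcp.isBounded
    have hzAx : infDist z Ax ≤ hausdorffDist (F n) Ax :=
      infDist_le_hausdorffDist_of_mem hzF hfin2
    calc infDist y Ax ≤ infDist z Ax + dist y z := infDist_le_infDist_add_dist
      _ < ε/3 + ε/3 := add_lt_add (lt_of_le_of_lt hzAx hn2) hzd
      _ < ε := by linarith
  have : infDist y Ax ≤ 0 := by
    by_contra h
    push_neg at h
    exact lt_irrefl _ (hmain _ h)
  have h0 : infDist y Ax = 0 := le_antisymm this infDist_nonneg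
  exact (hAxcl.mem_iff_infDist_zero hAxne).2 h0
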